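/- Let f be a probability density on ℝ satisfying Assumption F, whose distribution F has mean zero and variance σ² ∈ (0, ∞). Then the orthogonal projection of the score function ℓ = −f′/f onto the subspace S of L²(F) is ℓ₀(z) = ℓ(z) − z/σ². -/

import Mathlib

open MeasureTheory ProbabilityTheory

section AuxProofs
open Set Filter
open scoped ENNReal


lemma aux_zero_outside {f f' : ℝ → ℝ}
    (hAC : ∀ a b : ℝ, f b - f a = ∫ z in a..b, f' z)
    (hfI : Integrable f) {a b : ℝ} (hab : a ≤ b)
    (hni : ¬ IntervalIntegrable f' volume a b) :
    ∀ x, x ∉ Set.Ioo a b → f x = 0 := by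
  have key : ∀ c d : ℝ, c ≤ a → b ≤ d → f d = f c := by
    intro c d hc hd
    have hni' : ¬ IntervalIntegrable f' volume c d := by
      intro h
      exact hni (h.mono_set (Set.uIcc_subset_uIcc
        (by rw [Set.mem_uIcc]; left; exact ⟨hc, le_trans hab hd⟩)
        (by rw [Set.mem_uIcc]; left; exact ⟨le_trans hc hab, hd⟩)))
    have := hAC c d
    rw [intervalIntegral.integral_undef hni'] at this
    linarith
  have hconst : ∀ x, x ∉ Set.Ioo a b → f x = f a := by
    intro x hx
    rcases le_or_gt x a with h | h
    · have h1 : f b = f x := key x b h le_rfl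
      have h2 : f b = f a := key a b le_rfl le_rfl
      rw [← h1, h2]
    · have hbx : b ≤ x := by
        by_contra hbx
        push_neg at hbx
        exact hx ⟨h, hbx⟩
      exact key a x le_rfl hbx
  have hfa : f a = 0 := by
    by_contra hfa
    have hIci : IntegrableOn (fun _ : ℝ => f a) (Set.Ici b) volume := by
      apply (hfI.integrableOn (s := Set.Ici b)).congr_fun
        (fun x hx => hconst x (fun hm => (not_lt.2 hx) hm.2)) measurableSet_Ici
    rw [integrableOn_const_iff] at hIci
    rcases hIci with h | h
    · exact hfa (enorm_eq_zero.1 h)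
    · simp [Real.volume_Ici] at h
  intro x hx
  rw [hconst x hx, hfa]

lemma aux_locInt {f f' : ℝ → ℝ}
    (hAC : ∀ a b : ℝ, f b - f a = ∫ z in a..b, f' z)
    (hfI : Integrable f) (hfint : ∫ z, f z = 1) :
    LocallyIntegrable f' volume := by
  intro x
  by_contra h
  have hz : ∀ y, y ≠ x → f y = 0 := by
    intro y hy
    have hε : (0:ℝ) < |y - x| := by
      simp [sub_eq_zero, hy]
    have hni : ¬ IntervalIntegrable f' volume (x - |y-x|) (x + |y-x|) := by
      intro hii
      apply h
      refine ⟨Set.Ioo (x - |y-x|) (x + |y-x|), Ioo_mem_nhds (by linarith) (by linarith), ?_⟩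
      exact (hii.def').mono_set (by
        rw [Set.uIoc_of_le (by linarith)]
        exact Set.Ioo_subset_Ioc_self)
    have := aux_zero_outside hAC hfI (by linarith) hni y
    apply this
    intro hmem
    rcases abs_cases (y - x) with ⟨he, _⟩ | ⟨he, _⟩
    · have := hmem.2; rw [he] at this; linarith
    · have := hmem.1; rw [he] at this; linarith
  have hae : f =ᵐ[volume] (fun _ => 0) := by
    have hsub : {y | f y ≠ 0} ⊆ {x} := by
      intro y hy
      by_contra hyx
      exact hy (hz y (by simpa using hyx))
    exact measure_mono_null hsub (measure_singleton x)
  rw [integral_congr_ae hae] at hfint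
  simp at hfint

lemma aux_interval {f' : ℝ → ℝ} (hloc : LocallyIntegrable f' volume) (a b : ℝ) :
    IntervalIntegrable f' volume a b :=
  intervalIntegrable_iff.2
    ((hloc.integrableOn_isCompact isCompact_uIcc).mono_set Set.uIoc_subset_uIcc)

lemma aux_deriv_zero {f f' : ℝ → ℝ}
    (hAC : ∀ a b : ℝ, f b - f a = ∫ z in a..b, f' z)
    (hloc : LocallyIntegrable f' volume) (hcont : Continuous f) :
    ∀ᵐ z ∂(volume : Measure ℝ), f z = 0 → f' z = 0 := by
  set C : Set ℝ := f ⁻¹' {0} with hCdef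
  have hC : MeasurableSet C := hcont.measurable (measurableSet_singleton 0)
  have h1 := IsUnifLocDoublingMeasure.ae_tendsto_average_norm_sub
    (μ := (volume : Measure ℝ)) hloc 1
  have h2' := IsUnifLocDoublingMeasure.ae_tendsto_measure_inter_div
    (μ := (volume : Measure ℝ)) C 1
  have h2 : ∀ᵐ x ∂(volume.restrict C),
      Tendsto (fun r => volume (C ∩ Metric.closedBall x r) / volume (Metric.closedBall x r))
        (nhdsWithin 0 (Set.Ioi 0)) (nhds 1) := by
    filter_upwards [h2'] with x hx
    exact hx (fun _ => x) id tendsto_id (by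
      filter_upwards [self_mem_nhdsWithin] with r hr
      simp only [Metric.mem_closedBall, dist_self, one_mul]
      exact le_of_lt hr)
  have h2'' : ∀ᵐ x ∂(volume : Measure ℝ), x ∈ C →
      Tendsto (fun r => volume (C ∩ Metric.closedBall x r) / volume (Metric.closedBall x r))
        (nhdsWithin 0 (Set.Ioi 0)) (nhds 1) := (ae_restrict_iff' hC).1 h2
  filter_upwards [h1, h2''] with z hz1 hz2 hzC
  have hzC' : z ∈ C := by simpa [hCdef] using hzC
  -- one-sided averages
  have δlim : Tendsto (fun h : ℝ => h / 2) (nhdsWithin 0 (Set.Ioi 0))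
      (nhdsWithin 0 (Set.Ioi 0)) := by
    apply tendsto_nhdsWithin_of_tendsto_nhds_of_eventually_within
    · have : Tendsto (fun h : ℝ => h / 2) (nhds 0) (nhds 0) :=
        (continuous_id.div_const 2).tendsto' 0 0 (by norm_num)
      exact this.mono_left nhdsWithin_le_nhds
    · filter_upwards [self_mem_nhdsWithin] with h hh
      exact div_pos (Set.mem_Ioi.1 hh) (by norm_num)
  have hz1' : Tendsto
      (fun h : ℝ => ⨍ y in Metric.closedBall (z + h / 2) (h / 2), ‖f' y - f' z‖)
      (nhdsWithin 0 (Set.Ioi 0)) (nhds 0) := by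
    apply hz1 (fun h => z + h / 2) (fun h => h / 2) δlim
    filter_upwards [self_mem_nhdsWithin] with h hh
    simp only [Metric.mem_closedBall, Real.dist_eq, one_mul]
    rw [abs_sub_comm]
    rw [show z + h / 2 - z = h / 2 by ring, abs_of_pos (div_pos hh two_pos)]
  by_contra hne
  have hpos : 0 < |f' z| := abs_pos.2 hne
  have hev1 : ∀ᶠ h in nhdsWithin 0 (Set.Ioi 0),
      (⨍ y in Metric.closedBall (z + h / 2) (h / 2), ‖f' y - f' z‖) < |f' z| :=
    hz1'.eventually_lt_const hpos
  have hev2 : ∀ᶠ r : ℝ in nhdsWithin (0:ℝ) (Set.Ioi 0),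
      (3/4 : ℝ≥0∞) < volume (C ∩ Metric.closedBall z r) / volume (Metric.closedBall z r) :=
    (hz2 hzC').eventually_const_lt (by
      rw [ENNReal.div_lt_iff (by norm_num) (by norm_num)]
      norm_num)
  obtain ⟨u, hu, hsub⟩ := mem_nhdsGT_iff_exists_Ioo_subset.1
    ((hev1.and hev2).and self_mem_nhdsWithin)
  have hu0 : (0:ℝ) < u := hu
  set r : ℝ := u / 2 with hrdef
  have hr : r ∈ Set.Ioo (0:ℝ) u := ⟨by positivity, by simp [hrdef]; linarith⟩
  obtain ⟨⟨havg_r, hden_r⟩, hr0⟩ := hsub hr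
  -- find a point of C in (z, z+r]
  have hnonempty : (C ∩ Set.Ioc z (z + r)).Nonempty := by
    by_contra hemp
    rw [Set.not_nonempty_iff_eq_empty] at hemp
    have hsubIcc : C ∩ Metric.closedBall z r ⊆ Set.Icc (z - r) z := by
      intro y hy
      rw [Real.closedBall_eq_Icc] at hy
      rcases le_or_gt y z with h | h
      · exact ⟨hy.2.1, h⟩
      · exfalso
        have : y ∈ C ∩ Set.Ioc z (z + r) := ⟨hy.1, h, hy.2.2⟩
        rw [hemp] at this
        exact this
    have hle : volume (C ∩ Metric.closedBall z r) ≤ ENNReal.ofReal r := by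
      refine le_trans (measure_mono hsubIcc) ?_
      rw [Real.volume_Icc]
      exact le_of_eq (by ring_nf)
    have hratio : volume (C ∩ Metric.closedBall z r) / volume (Metric.closedBall z r)
        ≤ ENNReal.ofReal r / ENNReal.ofReal (2 * r) := by
      rw [Real.volume_closedBall]
      exact ENNReal.div_le_div_right hle _
    have h12 : ENNReal.ofReal r / ENNReal.ofReal (2 * r) = ENNReal.ofReal (1/2) := by
      rw [← ENNReal.ofReal_div_of_pos (by linarith [hr.1])]
      congr 1
      field_simp
    have hcontr := lt_of_lt_of_le hden_r (hratio.trans_eq h12)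
    have : ENNReal.ofReal (1/2) ≤ (3/4 : ℝ≥0∞) := by
      rw [show (3/4 : ℝ≥0∞) = ENNReal.ofReal (3/4) by
        rw [ENNReal.ofReal_div_of_pos (by norm_num)]
        norm_num]
      exact ENNReal.ofReal_le_ofReal (by norm_num)
    exact absurd (lt_of_lt_of_le hcontr this) (by norm_num)
  obtain ⟨w, hwC, hwIoc⟩ := hnonempty
  set h : ℝ := w - z with hhdef
  have hh0 : 0 < h := by simp [hhdef]; linarith [hwIoc.1]
  have hhu : h < u := by
    have := hwIoc.2
    simp only [hhdef]
    have : w ≤ z + r := hwIoc.2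
    have hru : r < u := hr.2
    linarith
  obtain ⟨⟨havg_h, _⟩, _⟩ := hsub ⟨hh0, hhu⟩
  -- the closed ball is [z, z+h] = [z, w]
  have hcb : Metric.closedBall (z + h / 2) (h / 2) = Set.Icc z w := by
    rw [Real.closedBall_eq_Icc]
    congr 1 <;> simp [hhdef] <;> ring
  have hzw : z ≤ w := le_of_lt hwIoc.1
  have hfw : f w = 0 := hwC
  have hfz : f z = 0 := hzC
  have hII : IntegrableOn f' (Set.Ioc z w) volume :=
    (hloc.integrableOn_isCompact isCompact_Icc).mono_set Set.Ioc_subset_Icc_self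
  have h0 : ∫ y in Set.Ioc z w, f' y = 0 := by
    have := hAC z w
    rw [intervalIntegral.integral_of_le hzw] at this
    rw [← this, hfw, hfz, sub_zero]
  have hvol : volume (Set.Ioc z w) = ENNReal.ofReal h := by
    rw [Real.volume_Ioc]
  have hconst : ∫ _ in Set.Ioc z w, f' z ∂volume = h * f' z := by
    rw [setIntegral_const, measureReal_def, hvol, ENNReal.toReal_ofReal (le_of_lt hh0), smul_eq_mul]
  have hIIc : IntegrableOn (fun _ : ℝ => f' z) (Set.Ioc z w) volume := by
    exact integrableOn_const (by rw [hvol]; exact ENNReal.ofReal_ne_top)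
  have key1 : h * |f' z| ≤ ∫ y in Set.Ioc z w, ‖f' y - f' z‖ := by
    have heq : ∫ y in Set.Ioc z w, (f' z - f' y) = h * f' z := by
      rw [integral_sub hIIc hII, h0, hconst, sub_zero]
    calc h * |f' z| = ‖∫ y in Set.Ioc z w, (f' z - f' y)‖ := by
          rw [heq, Real.norm_eq_abs, abs_mul, abs_of_pos hh0]
      _ ≤ ∫ y in Set.Ioc z w, ‖f' z - f' y‖ := norm_integral_le_integral_norm _
      _ = ∫ y in Set.Ioc z w, ‖f' y - f' z‖ := by
          congr 1
          ext y
          rw [norm_sub_rev]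
  have hGint : IntegrableOn (fun y => ‖f' y - f' z‖) (Set.Icc z w) volume := by
    apply Integrable.norm
    apply Integrable.sub (hloc.integrableOn_isCompact isCompact_Icc)
    exact integrableOn_const (by rw [Real.volume_Icc]; exact ENNReal.ofReal_ne_top)
  have key2 : ∫ y in Set.Ioc z w, ‖f' y - f' z‖ ≤ ∫ y in Set.Icc z w, ‖f' y - f' z‖ := by
    apply setIntegral_mono_set hGint
    · filter_upwards with y using norm_nonneg _
    · exact HasSubset.Subset.eventuallyLE Set.Ioc_subset_Icc_self
  have key3 : ∫ y in Set.Icc z w, ‖f' y - f' z‖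
      = h * ⨍ y in Metric.closedBall (z + h / 2) (h / 2), ‖f' y - f' z‖ := by
    rw [hcb, setAverage_eq, Real.volume_real_Icc_of_le hzw,
      show w - z = h from rfl, smul_eq_mul]
    field_simp
  have : h * |f' z| < h * |f' z| := by
    calc h * |f' z| ≤ ∫ y in Set.Ioc z w, ‖f' y - f' z‖ := key1
      _ ≤ ∫ y in Set.Icc z w, ‖f' y - f' z‖ := key2
      _ = h * ⨍ y in Metric.closedBall (z + h / 2) (h / 2), ‖f' y - f' z‖ := key3
      _ < h * |f' z| := by
          apply (mul_lt_mul_iff_right₀ hh0).2 havg_h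
  exact lt_irrefl _ this

lemma aux_lim_zero_top {f : ℝ → ℝ} (hfI : Integrable f) {c : ℝ}
    (h : Tendsto f atTop (nhds c)) : c = 0 := by
  by_contra hc
  have habs : Tendsto (fun x => |f x|) atTop (nhds |c|) := h.abs
  have hev : ∀ᶠ x in atTop, |c| / 2 < |f x| :=
    habs.eventually_const_lt (by have := abs_pos.2 hc; linarith)
  obtain ⟨R, hR⟩ := eventually_atTop.1 hev
  have h2 : IntegrableOn (fun _ : ℝ => |c| / 2) (Set.Ici R) volume := by
    apply Integrable.mono' (hfI.norm.integrableOn (s := Set.Ici R))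
      aestronglyMeasurable_const
    rw [ae_restrict_iff' measurableSet_Ici]
    filter_upwards with x hx
    rw [Real.norm_eq_abs, abs_of_nonneg (by positivity)]
    exact le_of_lt (hR x hx)
  rcases (integrableOn_const_iff (C := |c| / 2)).1 h2 with h | h
  · rw [enorm_eq_zero] at h
    rw [div_eq_zero_iff] at h
    rcases h with h | h
    · exact hc (abs_eq_zero.1 h)
    · norm_num at h
  · simp [Real.volume_Ici] at h

lemma aux_lim_zero_bot {f : ℝ → ℝ} (hfI : Integrable f) {c : ℝ}
    (h : Tendsto f atBot (nhds c)) : c = 0 := by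
  have : Tendsto (fun x => f (-x)) atTop (nhds c) := h.comp tendsto_neg_atTop_atBot
  apply aux_lim_zero_top ?_ this
  have : MeasurePreserving (fun x : ℝ => -x) volume volume :=
    Measure.measurePreserving_neg volume
  exact (this.integrable_comp_emb (MeasurableEquiv.neg ℝ).measurableEmbedding).2 hfI

lemma aux_tail_Ioi {f f' : ℝ → ℝ}
    (hAC : ∀ a b : ℝ, f b - f a = ∫ z in a..b, f' z)
    (hfI : Integrable f) (hf'I : Integrable f') (t : ℝ) :
    ∫ z in Set.Ioi t, f' z = - f t := by
  have h1 : Tendsto (fun x => ∫ u in t..x, f' u) atTop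
      (nhds (∫ z in Set.Ioi t, f' z)) :=
    intervalIntegral_tendsto_integral_Ioi t hf'I.integrableOn tendsto_id
  have h2 : Tendsto f atTop (nhds (f t + ∫ z in Set.Ioi t, f' z)) := by
    apply (tendsto_const_nhds.add h1).congr
    intro x
    have := hAC t x
    linarith
  have := aux_lim_zero_top hfI h2
  linarith

lemma aux_tail_Iic {f f' : ℝ → ℝ}
    (hAC : ∀ a b : ℝ, f b - f a = ∫ z in a..b, f' z)
    (hfI : Integrable f) (hf'I : Integrable f') (t : ℝ) :
    ∫ z in Set.Iic t, f' z = f t := by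
  have h1 : Tendsto (fun a => ∫ u in a..t, f' u) atBot
      (nhds (∫ z in Set.Iic t, f' z)) :=
    intervalIntegral_tendsto_integral_Iic t hf'I.integrableOn tendsto_id
  have h2 : Tendsto f atBot (nhds (f t - ∫ z in Set.Iic t, f' z)) := by
    apply (tendsto_const_nhds.sub h1).congr
    intro a
    have := hAC a t
    linarith
  have := aux_lim_zero_bot hfI h2
  linarith

lemma aux_int_f'_zero {f f' : ℝ → ℝ}
    (hAC : ∀ a b : ℝ, f b - f a = ∫ z in a..b, f' z)
    (hfI : Integrable f) (hf'I : Integrable f') :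
    ∫ z, f' z = 0 := by
  have := intervalIntegral.integral_Iic_add_Ioi (b := (0:ℝ)) hf'I.integrableOn hf'I.integrableOn
  rw [aux_tail_Ioi hAC hfI hf'I 0, aux_tail_Iic hAC hfI hf'I 0] at this
  linarith [this.symm]

lemma aux_int_zf' {f f' : ℝ → ℝ} (hf'm : Measurable f')
    (hfI : Integrable f) (hfint : ∫ z, f z = 1)
    (hf'I : Integrable f') (hzf'I : Integrable (fun z => z * f' z))
    (htop : ∀ t : ℝ, ∫ z in Set.Ioi t, f' z = - f t)
    (hbot : ∀ t : ℝ, ∫ z in Set.Iic t, f' z = f t) :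
    ∫ z, z * f' z = -1 := by
  set k : ℝ × ℝ → ℝ := fun p =>
    if 0 < p.1 ∧ p.1 < p.2 then f' p.2 else if p.2 < p.1 ∧ p.1 < 0 then -f' p.2 else 0
    with hkdef
  have hS1 : MeasurableSet {q : ℝ × ℝ | 0 < q.1 ∧ q.1 < q.2} :=
    (measurableSet_lt measurable_const measurable_fst).inter
      (measurableSet_lt measurable_fst measurable_snd)
  have hS2 : MeasurableSet {q : ℝ × ℝ | q.2 < q.1 ∧ q.1 < 0} :=
    (measurableSet_lt measurable_snd measurable_fst).inter
      (measurableSet_lt measurable_fst measurable_const)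
  have hk_meas : Measurable k := by
    apply Measurable.ite hS1 (hf'm.comp measurable_snd)
    exact Measurable.ite hS2 (hf'm.comp measurable_snd).neg measurable_const
  -- slices in t for fixed z
  have hslice_pos : ∀ z : ℝ, 0 < z →
      (fun t => k (t, z)) = Set.indicator (Set.Ioo 0 z) (fun _ => f' z) := by
    intro z hz
    funext t
    by_cases ht : t ∈ Set.Ioo 0 z
    · rw [Set.indicator_of_mem ht]
      simp only [hkdef]
      rw [if_pos ⟨ht.1, ht.2⟩]
    · rw [Set.indicator_of_notMem ht]
      simp only [hkdef, Set.mem_Ioo, not_and_or] at ht ⊢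
      rw [if_neg, if_neg]
      · rintro ⟨h1, h2⟩; linarith
      · rintro ⟨h1, h2⟩
        rcases ht with h | h <;> simp at h <;> linarith
  have hslice_neg : ∀ z : ℝ, z < 0 →
      (fun t => k (t, z)) = Set.indicator (Set.Ioo z 0) (fun _ => -f' z) := by
    intro z hz
    funext t
    by_cases ht : t ∈ Set.Ioo z 0
    · rw [Set.indicator_of_mem ht]
      simp only [hkdef]
      rw [if_neg (by rintro ⟨h1, h2⟩; linarith [ht.2]), if_pos ⟨ht.1, ht.2⟩]
    · rw [Set.indicator_of_notMem ht]
      simp only [hkdef, Set.mem_Ioo, not_and_or] at ht ⊢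
      rw [if_neg, if_neg]
      · rintro ⟨h1, h2⟩
        rcases ht with h | h <;> simp at h <;> linarith
      · rintro ⟨h1, h2⟩; linarith
  have hslice_zero : ∀ t : ℝ, k (t, (0:ℝ)) = 0 := by
    intro t
    simp only [hkdef]
    rw [if_neg (by rintro ⟨h1, h2⟩; linarith), if_neg (by rintro ⟨h1, h2⟩; linarith)]
  -- integrability of slices
  have hsliceI : ∀ z : ℝ, Integrable (fun t => k (t, z)) volume := by
    intro z
    rcases lt_trichotomy z 0 with hz | hz | hz
    · rw [hslice_neg z hz]
      rw [integrable_indicator_iff measurableSet_Ioo]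
      exact integrableOn_const (by rw [Real.volume_Ioo]; exact ENNReal.ofReal_ne_top)
    · subst hz
      apply Integrable.congr (integrable_zero _ _ _)
      filter_upwards with t
      exact (hslice_zero t).symm
    · rw [hslice_pos z hz]
      rw [integrable_indicator_iff measurableSet_Ioo]
      exact integrableOn_const (by rw [Real.volume_Ioo]; exact ENNReal.ofReal_ne_top)
  -- the inner t-integral of the norm
  have hnorm : ∀ z : ℝ, (∫ t, ‖k (t, z)‖) = |z * f' z| := by
    intro z
    rcases lt_trichotomy z 0 with hz | hz | hz
    · have hpt := fun t => congrFun (hslice_neg z hz) t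
      have h1 : (∫ t, ‖k (t, z)‖) = ∫ t, Set.indicator (Set.Ioo z 0) (fun _ => ‖-f' z‖) t := by
        apply integral_congr_ae
        filter_upwards with t
        rw [hpt t, Set.indicator_apply, Set.indicator_apply]
        split <;> simp
      rw [h1, integral_indicator measurableSet_Ioo, setIntegral_const, Real.volume_real_Ioo_of_le (by linarith), smul_eq_mul]
      rw [abs_mul]
      rw [norm_neg, Real.norm_eq_abs, abs_of_neg hz]
      ring
    · subst hz
      simp only [hslice_zero]
      simp
    · have hpt := fun t => congrFun (hslice_pos z hz) t
      have h1 : (∫ t, ‖k (t, z)‖) = ∫ t, Set.indicator (Set.Ioo 0 z) (fun _ => ‖f' z‖) t := by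
        apply integral_congr_ae
        filter_upwards with t
        rw [hpt t, Set.indicator_apply, Set.indicator_apply]
        split <;> simp
      rw [h1, integral_indicator measurableSet_Ioo, setIntegral_const, Real.volume_real_Ioo_of_le (by linarith), smul_eq_mul]
      rw [abs_mul, Real.norm_eq_abs, abs_of_pos hz]
      ring
  -- integrability on the product
  have hk_int : Integrable k ((volume : Measure ℝ).prod volume) := by
    rw [integrable_prod_iff' hk_meas.aestronglyMeasurable]
    constructor
    · exact ae_of_all _ hsliceI
    · apply Integrable.congr hzf'I.abs
      filter_upwards with z
      rw [hnorm z]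
  -- swap
  have hswap : (∫ t, ∫ z, k (t, z)) = ∫ z, ∫ t, k (t, z) :=
    integral_integral_swap hk_int
  -- RHS: equals ∫ z * f' z
  have hRHS : (∫ z, ∫ t, k (t, z)) = ∫ z, z * f' z := by
    congr 1
    funext z
    rcases lt_trichotomy z 0 with hz | hz | hz
    · rw [hslice_neg z hz, integral_indicator measurableSet_Ioo, setIntegral_const,
        Real.volume_real_Ioo_of_le (by linarith), smul_eq_mul]
      ring
    · subst hz
      simp only [hslice_zero]
      simp
    · rw [hslice_pos z hz, integral_indicator measurableSet_Ioo, setIntegral_const,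
        Real.volume_real_Ioo_of_le (by linarith), smul_eq_mul]
      ring
  -- LHS: equals -1
  have hLHS : (∫ t, ∫ z, k (t, z)) = -1 := by
    have hae : ∀ᵐ t : ℝ ∂volume, (∫ z, k (t, z)) = -f t := by
      have hne : ∀ᵐ t : ℝ ∂volume, t ≠ 0 := by
        rw [ae_iff]
        have : {t : ℝ | ¬ t ≠ 0} = {0} := by ext t; simp
        rw [this]
        exact measure_singleton 0
      filter_upwards [hne] with t ht
      rcases lt_or_gt_of_ne ht with ht | ht
      · have heq : (fun z => k (t, z)) = Set.indicator (Set.Iio t) (fun z => -f' z) := by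
          funext z
          by_cases hzt : z ∈ Set.Iio t
          · rw [Set.indicator_of_mem hzt]
            simp only [hkdef]
            rw [if_neg (by rintro ⟨h1, h2⟩; linarith), if_pos ⟨hzt, ht⟩]
          · rw [Set.indicator_of_notMem hzt]
            simp only [Set.mem_Iio, not_lt] at hzt
            simp only [hkdef]
            rw [if_neg (by rintro ⟨h1, h2⟩; linarith), if_neg (by rintro ⟨h1, h2⟩; linarith)]
        rw [heq, integral_indicator measurableSet_Iio]
        rw [integral_neg]
        rw [← integral_Iic_eq_integral_Iio, hbot t]
      · have heq : (fun z => k (t, z)) = Set.indicator (Set.Ioi t) f' := by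
          funext z
          by_cases hzt : z ∈ Set.Ioi t
          · rw [Set.indicator_of_mem hzt]
            simp only [hkdef]
            rw [if_pos ⟨ht, hzt⟩]
          · rw [Set.indicator_of_notMem hzt]
            simp only [Set.mem_Ioi, not_lt] at hzt
            simp only [hkdef]
            rw [if_neg (by rintro ⟨h1, h2⟩; linarith), if_neg (by rintro ⟨h1, h2⟩; linarith)]
        rw [heq, integral_indicator measurableSet_Ioi, htop t]
    rw [integral_congr_ae hae, integral_neg, hfint]
  rw [← hRHS, ← hswap, hLHS]


end AuxProofs

open scoped ENNReal NNReal

theorem projection_of_score_onto_S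
    (f f' : ℝ → ℝ) (hf'm : Measurable f')
    (hfpos : ∀ z, 0 ≤ f z) (hfint : ∫ z, f z = 1)
    (hAC : ∀ a b : ℝ, f b - f a = ∫ z in a..b, f' z)
    (F : Measure ℝ)
    (hF : F = (volume : Measure ℝ).withDensity fun z => ENNReal.ofReal (f z))
    (ℓ : ℝ → ℝ) (hℓ : ℓ = fun z => -f' z / f z)
    (hJ : Integrable fun z => ℓ z ^ 2 * f z)
    (hmean : ∫ z, z ∂F = 0)
    (σ2 : ℝ) (hσ2 : σ2 = ∫ z, z ^ 2 ∂F) (hσpos : 0 < σ2)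
    (ℓL : Lp ℝ 2 F) (hℓL : ℓL =ᵐ[F] ℓ) :
    ∃ ℓ₀ : Lp ℝ 2 F,
      (ℓ₀ =ᵐ[F] fun z => ℓ z - z / σ2) ∧
        ((∫ z, ℓ₀ z ∂F = 0) ∧ (∫ z, z * ℓ₀ z ∂F = 0)) ∧
        ∀ s : Lp ℝ 2 F,
          ((∫ z, s z ∂F = 0) ∧ (∫ z, z * s z ∂F = 0)) →
            (inner ℝ (ℓL - ℓ₀) s : ℝ) = 0 := by
  -- f is integrable
  have hfI : Integrable f volume := by
    by_contra h
    rw [integral_undef h] at hfint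
    norm_num at hfint
  have hloc : LocallyIntegrable f' volume := aux_locInt hAC hfI hfint
  have hcont : Continuous f := by
    have hrepr : f = fun x => f 0 + ∫ u in (0:ℝ)..x, f' u := by
      funext x
      have := hAC 0 x
      linarith
    rw [hrepr]
    exact continuous_const.add (intervalIntegral.continuous_primitive (aux_interval hloc) 0)
  have hfm : Measurable f := hcont.measurable
  have hzero : ∀ᵐ z ∂(volume : Measure ℝ), f z = 0 → f' z = 0 :=
    aux_deriv_zero hAC hloc hcont
  have hℓm : Measurable ℓ := by
    rw [hℓ]
    exact hf'm.neg.div hfm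
  -- g = ℓ f
  have hgm : Measurable (fun z => ℓ z * f z) := hℓm.mul hfm
  have hgI : Integrable (fun z => ℓ z * f z) volume := by
    apply Integrable.mono' ((hJ.add hfI).div_const 2) hgm.aestronglyMeasurable
    filter_upwards with z
    rw [Real.norm_eq_abs, abs_mul, abs_of_nonneg (hfpos z)]
    simp only [Pi.add_apply]
    have h1 : 0 ≤ (|ℓ z| - 1) ^ 2 * f z := mul_nonneg (sq_nonneg _) (hfpos z)
    have h2 : (|ℓ z| - 1) ^ 2 * f z = ℓ z ^ 2 * f z - 2 * (|ℓ z| * f z) + f z := by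
      linear_combination f z * sq_abs (ℓ z)
    linarith
  have hf'g : f' =ᵐ[volume] fun z => -(ℓ z * f z) := by
    filter_upwards [hzero] with z hz
    by_cases hfz : f z = 0
    · rw [hz hfz, hfz, mul_zero, neg_zero]
    · rw [hℓ]
      field_simp
  have hf'I : Integrable f' volume := hgI.neg.congr hf'g.symm
  have hintf' : ∫ z, f' z = 0 := aux_int_f'_zero hAC hfI hf'I
  -- transfer lemmas between F and volume
  have hfnn : Measurable fun z => Real.toNNReal (f z) := hfm.real_toNNReal
  have hFd : F = (volume : Measure ℝ).withDensity fun z => ((Real.toNNReal (f z) : ℝ≥0) : ℝ≥0∞) :=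
    hF
  have htrans : ∀ φ : ℝ → ℝ, Integrable φ F ↔ Integrable (fun z => f z * φ z) volume := by
    intro φ
    rw [hFd, integrable_withDensity_iff_integrable_coe_smul hfnn]
    constructor <;> intro h <;> apply h.congr <;> filter_upwards with z <;>
      rw [smul_eq_mul, Real.coe_toNNReal _ (hfpos z)]
  have htrint : ∀ φ : ℝ → ℝ, ∫ z, φ z ∂F = ∫ z, f z * φ z := by
    intro φ
    rw [hFd, integral_withDensity_eq_integral_smul hfnn φ]
    apply integral_congr_ae
    filter_upwards with z
    rw [NNReal.smul_def, smul_eq_mul, Real.coe_toNNReal _ (hfpos z)]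
  -- The score integrates to zero
  have hIℓF : Integrable ℓ F := by
    rw [htrans]
    exact hgI.congr (by filter_upwards with z; rw [mul_comm])
  have hintℓF : ∫ z, ℓ z ∂F = 0 := by
    rw [htrint]
    have h1 : ∫ z, f z * ℓ z = ∫ z, -f' z := by
      apply integral_congr_ae
      filter_upwards [hf'g] with z hz
      rw [hz]
      ring
    rw [h1, integral_neg, hintf', neg_zero]
  -- second moment integrability
  have hz2F : Integrable (fun z : ℝ => z ^ 2) F := by
    by_contra h
    rw [integral_undef h] at hσ2
    rw [hσ2] at hσpos
    exact lt_irrefl _ hσpos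
  have hz2fI : Integrable (fun z => f z * z ^ 2) volume := (htrans _).1 hz2F
  have hℓ2fI : Integrable (fun z => f z * ℓ z ^ 2) volume :=
    hJ.congr (by filter_upwards with z; rw [mul_comm])
  have hzfI : Integrable (fun z => f z * z) volume := by
    apply Integrable.mono' ((hz2fI.add hfI).div_const 2)
      (hfm.mul measurable_id).aestronglyMeasurable
    filter_upwards with z
    simp only [Pi.mul_apply, id_eq]
    rw [Real.norm_eq_abs, abs_mul, abs_of_nonneg (hfpos z)]
    simp only [Pi.add_apply]
    have h1 : 0 ≤ (|z| - 1) ^ 2 * f z := mul_nonneg (sq_nonneg _) (hfpos z)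
    have h2 : (|z| - 1) ^ 2 * f z = f z * z ^ 2 - 2 * (f z * |z|) + f z := by
      linear_combination f z * sq_abs z
    linarith
  have hIidF : Integrable (fun z : ℝ => z) F := (htrans _).2 hzfI
  have hzℓfI : Integrable (fun z => f z * (z * ℓ z)) volume := by
    apply Integrable.mono' ((hz2fI.add hℓ2fI).div_const 2)
      (hfm.mul (measurable_id.mul hℓm)).aestronglyMeasurable
    filter_upwards with z
    simp only [Pi.mul_apply, id_eq]
    rw [Real.norm_eq_abs, abs_mul, abs_of_nonneg (hfpos z), abs_mul]
    simp only [Pi.add_apply]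
    have h1 : 0 ≤ (|z| - |ℓ z|) ^ 2 * f z := mul_nonneg (sq_nonneg _) (hfpos z)
    have h2 : (|z| - |ℓ z|) ^ 2 * f z
        = f z * z ^ 2 - 2 * (f z * (|z| * |ℓ z|)) + f z * ℓ z ^ 2 := by
      linear_combination f z * sq_abs z + f z * sq_abs (ℓ z)
    linarith
  have hIzℓF : Integrable (fun z : ℝ => z * ℓ z) F := (htrans _).2 hzℓfI
  have hzf'I : Integrable (fun z => z * f' z) volume := by
    apply hzℓfI.neg.congr
    filter_upwards [hf'g] with z hz
    simp only [Pi.neg_apply]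
    rw [hz]
    ring
  have hintzf' : ∫ z, z * f' z = -1 :=
    aux_int_zf' hf'm hfI hfint hf'I hzf'I
      (aux_tail_Ioi hAC hfI hf'I) (aux_tail_Iic hAC hfI hf'I)
  have hintzℓF : ∫ z, z * ℓ z ∂F = 1 := by
    rw [htrint]
    have h1 : ∫ z, f z * (z * ℓ z) = ∫ z, -(z * f' z) := by
      apply integral_congr_ae
      filter_upwards [hf'g] with z hz
      rw [hz]
      ring
    rw [h1, integral_neg, hintzf']
    norm_num
  -- the Lp element for the identity
  have hmemid : MemLp (fun z : ℝ => z) 2 F :=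
    (memLp_two_iff_integrable_sq aestronglyMeasurable_id).2 hz2F
  set zL : Lp ℝ 2 F := hmemid.toLp (fun z : ℝ => z) with hzL
  have hcoe : ⇑(ℓL - σ2⁻¹ • zL) =ᵐ[F] fun z => ℓ z - σ2⁻¹ * z := by
    filter_upwards [Lp.coeFn_sub ℓL (σ2⁻¹ • zL), Lp.coeFn_smul σ2⁻¹ zL,
      hmemid.coeFn_toLp, hℓL] with z h1 h2 h3 h4
    rw [h1, Pi.sub_apply, h2, Pi.smul_apply, smul_eq_mul, h4]
    rw [← hzL] at h3
    rw [h3]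
  refine ⟨ℓL - σ2⁻¹ • zL, ?_, ⟨?_, ?_⟩, ?_⟩
  · filter_upwards [hcoe] with z hz
    rw [hz]
    field_simp
  · rw [integral_congr_ae hcoe, integral_sub hIℓF (hIidF.const_mul σ2⁻¹),
      hintℓF, integral_const_mul, hmean]
    ring
  · have hmul : (fun z => z * (ℓL - σ2⁻¹ • zL) z) =ᵐ[F]
        fun z => z * ℓ z - σ2⁻¹ * z ^ 2 := by
      filter_upwards [hcoe] with z hz
      rw [hz]
      ring
    rw [integral_congr_ae hmul, integral_sub hIzℓF (hz2F.const_mul σ2⁻¹),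
      hintzℓF, integral_const_mul, ← hσ2]
    field_simp
    norm_num
  · rintro s ⟨hs1, hs2⟩
    have hsub : ℓL - (ℓL - σ2⁻¹ • zL) = σ2⁻¹ • zL := sub_sub_cancel _ _
    rw [hsub, real_inner_smul_left]
    have hzs : (inner ℝ zL s : ℝ) = 0 := by
      rw [MeasureTheory.L2.inner_def]
      have : (fun a => (inner ℝ (zL a) (s a) : ℝ)) =ᵐ[F] fun a => a * s a := by
        have h3 : ⇑zL =ᵐ[F] fun z : ℝ => z := by rw [hzL]; exact hmemid.coeFn_toLp
        filter_upwards [h3] with a ha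
        rw [RCLike.inner_apply, ha]
        simp
        ring
      rw [integral_congr_ae this, hs2]
    rw [hzs, mul_zero]
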